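/- (Stationary state, linear diffusion, $\alpha = 2$) The function $u_\infty(w) = C_\infty(1+w)^{m_1^\infty/(2\lambda^2)}(1-w)^{-m_1^\infty/(2\lambda^2)}\exp\left(\frac{m_1^\infty w - \sigma}{\lambda^2(1-w^2)}\right)$ satisfies $\frac{\lambda^2}{2}(1-w^2)^2 u_\infty'(w) = (m_1^\infty - \sigma w)u_\infty(w)$ for all $w \in (-1,1)$. -/

import Mathlib

/-- stationary state for linear diffusion with mobility
`D²(w) = (1-w²)²` (case `α = 2`). -/
theorem stationary_state_linear_alpha_two
    (lam σ m1inf Cinf : ℝ) (hlam : 0 < lam) (hσ : 0 < σ) (hC : 0 < Cinf) :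
    ∀ w ∈ Set.Ioo (-1 : ℝ) 1,
      lam ^ 2 / 2 * (1 - w ^ 2) ^ 2 *
          deriv (fun x : ℝ =>
            Cinf * (1 + x) ^ (m1inf / (2 * lam ^ 2))
              * (1 - x) ^ (-m1inf / (2 * lam ^ 2))
              * Real.exp ((m1inf * x - σ) / (lam ^ 2 * (1 - x ^ 2)))) w
        = (m1inf - σ * w) *
            (Cinf * (1 + w) ^ (m1inf / (2 * lam ^ 2))
              * (1 - w) ^ (-m1inf / (2 * lam ^ 2))
              * Real.exp ((m1inf * w - σ) / (lam ^ 2 * (1 - w ^ 2)))) := by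
  intro w hw
  obtain ⟨hw1, hw2⟩ := hw
  have h1p : (0:ℝ) < 1 + w := by linarith
  have h1m : (0:ℝ) < 1 - w := by linarith
  have hsq : (0:ℝ) < 1 - w ^ 2 := by nlinarith
  have hl : lam ^ 2 ≠ 0 := by positivity
  have hd0 : lam ^ 2 * (1 - w ^ 2) ≠ 0 := by positivity
  set a : ℝ := m1inf / (2 * lam ^ 2) with ha
  have hA : HasDerivAt (fun x : ℝ => (1 + x) ^ a) (1 * a * (1 + w) ^ (a - 1)) w := by
    have h : HasDerivAt (fun x : ℝ => 1 + x) 1 w := (hasDerivAt_id w).const_add 1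
    exact h.rpow_const (Or.inl (ne_of_gt h1p))
  have hB : HasDerivAt (fun x : ℝ => (1 - x) ^ (-a)) ((-1) * (-a) * (1 - w) ^ (-a - 1)) w := by
    have h : HasDerivAt (fun x : ℝ => 1 - x) (-1) w := (hasDerivAt_id w).const_sub 1
    exact h.rpow_const (Or.inl (ne_of_gt h1m))
  have hg : HasDerivAt (fun x : ℝ => (m1inf * x - σ) / (lam ^ 2 * (1 - x ^ 2)))
      ((m1inf * (lam ^ 2 * (1 - w ^ 2)) - (m1inf * w - σ) * (lam ^ 2 * (-(2 * w)))) /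
        (lam ^ 2 * (1 - w ^ 2)) ^ 2) w := by
    have hn : HasDerivAt (fun x : ℝ => m1inf * x - σ) m1inf w := by
      simpa using ((hasDerivAt_id w).const_mul m1inf).sub_const σ
    have hdd : HasDerivAt (fun x : ℝ => lam ^ 2 * (1 - x ^ 2)) (lam ^ 2 * (-(2 * w))) w := by
      have : HasDerivAt (fun x : ℝ => 1 - x ^ 2) (-(2 * w)) w := by
        simpa using ((hasDerivAt_pow 2 w)).const_sub 1
      exact this.const_mul (lam ^ 2)
    exact hn.div hdd hd0
  have hE := hg.exp
  have hF := (((hA.const_mul Cinf).mul hB).mul hE).deriv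
  rw [show -m1inf / (2 * lam ^ 2) = -a by rw [ha]; ring] at *
  rw [show (fun x : ℝ => Cinf * (1 + x) ^ a * (1 - x) ^ (-a) * Real.exp ((m1inf * x - σ) / (lam ^ 2 * (1 - x ^ 2)))) = (((fun y : ℝ => Cinf * (1 + y) ^ a) * fun x : ℝ => (1 - x) ^ (-a)) * fun x : ℝ => Real.exp ((m1inf * x - σ) / (lam ^ 2 * (1 - x ^ 2)))) from rfl, hF]; simp only [Pi.mul_apply]
  have e1 : (1 + w) ^ (a - 1) = (1 + w) ^ a / (1 + w) :=
    Real.rpow_sub_one (ne_of_gt h1p) a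
  have e2 : (1 - w) ^ (-a - 1) = (1 - w) ^ (-a) / (1 - w) :=
    Real.rpow_sub_one (ne_of_gt h1m) (-a)
  rw [e1, e2]
  have hm : m1inf = a * (2 * lam ^ 2) := by
    rw [ha]; field_simp
  rw [hm]
  have hEpos : Real.exp ((a * (2 * lam ^ 2) * w - σ) / (lam ^ 2 * (1 - w ^ 2))) ≠ 0 :=
    Real.exp_ne_zero _
  field_simp
  ring
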